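/- For x > 0, the maximum over t ∈ [0, √2] of the function t²/4 − (max(t − x, 0))²/2 equals x²/2 if 0 < x ≤ 1/√2, and equals 1/2 − (max(√2 − x, 0))²/2 if x > 1/√2. -/
import Mathlib


noncomputable def g (x t : ℝ) : ℝ := t^2 / 4 - (max (t - x) 0)^2 / 2

theorem stmt_5 (x : ℝ) (hx : 0 < x) :
    (x ≤ (Real.sqrt 2)⁻¹ →
      IsGreatest (g x '' Set.Icc 0 (Real.sqrt 2)) (x^2 / 2)) ∧
    ((Real.sqrt 2)⁻¹ < x →
      IsGreatest (g x '' Set.Icc 0 (Real.sqrt 2))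
        (1/2 - (max (Real.sqrt 2 - x) 0)^2 / 2)) := by
  have hs : (0:ℝ) < Real.sqrt 2 := by positivity
  have hs2 : Real.sqrt 2 ^ 2 = 2 := Real.sq_sqrt (by norm_num)
  have hinv : (Real.sqrt 2)⁻¹ = Real.sqrt 2 / 2 := by
    rw [eq_div_iff (by norm_num), inv_mul_eq_div, div_eq_iff (ne_of_gt hs)]
    nlinarith
  constructor
  · intro hxs
    rw [hinv] at hxs
    constructor
    · refine ⟨2*x, ⟨by linarith, by linarith⟩, ?_⟩
      simp only [g]
      rw [max_eq_left (by linarith : (0:ℝ) ≤ 2*x - x)]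
      ring
    · rintro y ⟨t, ⟨ht0, ht2⟩, rfl⟩
      simp only [g]
      rcases le_or_gt t x with h | h
      · rw [max_eq_right (by linarith : t - x ≤ 0)]
        nlinarith
      · rw [max_eq_left (by linarith : (0:ℝ) ≤ t - x)]
        nlinarith [sq_nonneg (t - 2*x)]
  · intro hxs
    rw [hinv] at hxs
    constructor
    · refine ⟨Real.sqrt 2, ⟨le_of_lt hs, le_refl _⟩, ?_⟩
      simp only [g]
      rw [hs2]
      ring
    · rintro y ⟨t, ⟨ht0, ht2⟩, rfl⟩
      simp only [g]
      rcases le_or_gt (Real.sqrt 2) x with hbig | hsmall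
      · rw [max_eq_right (by linarith : Real.sqrt 2 - x ≤ 0)]
        nlinarith [sq_nonneg (max (t - x) 0)]
      · rw [max_eq_left (by linarith : (0:ℝ) ≤ Real.sqrt 2 - x)]
        rcases le_or_gt t x with h | h
        · rw [max_eq_right (by linarith : t - x ≤ 0)]
          nlinarith [mul_nonneg (by linarith : (0:ℝ) ≤ Real.sqrt 2 - x)
            (by linarith : (0:ℝ) ≤ 3*x - Real.sqrt 2), sq_nonneg t,
            mul_self_le_mul_self ht0 h]
        · rw [max_eq_left (by linarith : (0:ℝ) ≤ t - x)]
          nlinarith [mul_nonneg (by linarith : (0:ℝ) ≤ Real.sqrt 2 - t)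
            (by linarith : (0:ℝ) ≤ 4*x - Real.sqrt 2 - t)]
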